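/- For any set L of graphs (of arbitrary sorts), graphs G₁ and G₂ are equivalent under the syntactic congruence of L in the HR graph algebra if and only if they have the same sort and for every graph G, every finite permutation α of source labels, and every finite sort τ: rename_α(restrict_τ(G₁ ∥ G)) ∈ L ⟺ rename_α(restrict_τ(G₂ ∥ G)) ∈ L. -/

import Mathlib

set_option autoImplicit false

namespace GraphCF

noncomputable section

/-! ### Concrete graphs

A concrete graph over an alphabet `Lab` of edge labels (with arities `ar`):
vertices `Fin n`, edges `Fin m`, each edge carrying a label and the sequence of
attached vertices, and an assignment of the source labels in the sort `srt`
(a finite set of natural numbers) to vertices.  Graphs in the paper are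
isomorphism classes of concrete graphs; we work with concrete graphs together
with the isomorphism relation `GIso`. -/
structure CG (Lab : Type) (ar : Lab → ℕ) : Type where
  n : ℕ
  m : ℕ
  edg : Fin m → (a : Lab) × (Fin (ar a) → Fin n)
  srt : Finset ℕ
  src : {s : ℕ // s ∈ srt} → Fin n

variable {Lab : Type} {ar : Lab → ℕ}

instance quotFinite {α : Type} [Finite α] (r : α → α → Prop) : Finite (Quot r) :=
  Finite.of_surjective (Quot.mk r) fun q => Quot.exists_rep q

/-- The graph `0_τ` consisting only of sources, one for each label in `τ`. -/
def czero (τ : Finset ℕ) : CG Lab ar where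
  n := τ.card
  m := 0
  edg e := Fin.elim0 e
  srt := τ
  src s := τ.equivFin ⟨s.1, s.2⟩

/-- The single-edge graph `a_(s₁,…,s_k)`. -/
def cedge (a : Lab) (s : Fin (ar a) → ℕ) : CG Lab ar where
  n := (Finset.image s Finset.univ).card
  m := 1
  edg _ := ⟨a, fun i => (Finset.image s Finset.univ).equivFin
    ⟨s i, Finset.mem_image_of_mem s (Finset.mem_univ i)⟩⟩
  srt := Finset.image s Finset.univ
  src t := (Finset.image s Finset.univ).equivFin ⟨t.1, t.2⟩

/-- Restriction of sources: keep only the source labels in `τ`. -/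
def crestrict (τ : Finset ℕ) (G : CG Lab ar) : CG Lab ar where
  n := G.n
  m := G.m
  edg := G.edg
  srt := G.srt ∩ τ
  src s := G.src ⟨s.1, (Finset.mem_inter.mp s.2).1⟩

/-- Renaming of sources along a permutation `α`; the new sort is `α⁻¹(srt)`. -/
def crename (α : Equiv.Perm ℕ) (G : CG Lab ar) : CG Lab ar where
  n := G.n
  m := G.m
  edg := G.edg
  srt := G.srt.image (α.symm : ℕ → ℕ)
  src s := G.src ⟨α s.1, by
    obtain ⟨y, hy, he⟩ := Finset.mem_image.mp s.2
    rw [← he, Equiv.apply_symm_apply]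
    exact hy⟩

/-- The fusion relation used to define parallel composition: sources of the two
graphs carrying the same label are identified. -/
def fuseRel (G₁ G₂ : CG Lab ar) :
    (Fin G₁.n ⊕ Fin G₂.n) → (Fin G₁.n ⊕ Fin G₂.n) → Prop :=
  fun x y => ∃ (s : ℕ) (h₁ : s ∈ G₁.srt) (h₂ : s ∈ G₂.srt),
    x = Sum.inl (G₁.src ⟨s, h₁⟩) ∧ y = Sum.inr (G₂.src ⟨s, h₂⟩)

/-- Parallel composition `G₁ ∥ G₂`: disjoint union with fusion of equally
labeled sources; the sort is the union of the sorts. -/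
def ccomp (G₁ G₂ : CG Lab ar) : CG Lab ar :=
  let e := Finite.equivFin (Quot (fuseRel G₁ G₂))
  { n := Nat.card (Quot (fuseRel G₁ G₂))
    m := G₁.m + G₂.m
    edg := fun i =>
      match finSumFinEquiv.symm i with
      | Sum.inl e₁ => ⟨(G₁.edg e₁).1, fun j => e (Quot.mk _ (Sum.inl ((G₁.edg e₁).2 j)))⟩
      | Sum.inr e₂ => ⟨(G₂.edg e₂).1, fun j => e (Quot.mk _ (Sum.inr ((G₂.edg e₂).2 j)))⟩
    srt := G₁.srt ∪ G₂.srt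
    src := fun s =>
      if h : s.1 ∈ G₁.srt then e (Quot.mk _ (Sum.inl (G₁.src ⟨s.1, h⟩)))
      else e (Quot.mk _ (Sum.inr (G₂.src ⟨s.1, (Finset.mem_union.mp s.2).resolve_left h⟩))) }

theorem crestrict_srt (τ : Finset ℕ) (G : CG Lab ar) :
    (crestrict τ G).srt = G.srt ∩ τ := rfl

theorem crename_srt (α : Equiv.Perm ℕ) (G : CG Lab ar) :
    (crename α G).srt = G.srt.image (α.symm : ℕ → ℕ) := rfl

theorem ccomp_srt (G₁ G₂ : CG Lab ar) : (ccomp G₁ G₂).srt = G₁.srt ∪ G₂.srt := rfl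

/-- Isomorphism of concrete graphs. -/
def GIso (G₁ G₂ : CG Lab ar) : Prop :=
  G₁.srt = G₂.srt ∧
  ∃ (ev : Fin G₁.n ≃ Fin G₂.n) (ee : Fin G₁.m ≃ Fin G₂.m),
    (∀ e, (G₂.edg (ee e)).1 = (G₁.edg e).1 ∧
      HEq (G₂.edg (ee e)).2 (fun i => ev ((G₁.edg e).2 i))) ∧
    (∀ (s : ℕ) (h₁ : s ∈ G₁.srt) (h₂ : s ∈ G₂.srt),
      ev (G₁.src ⟨s, h₁⟩) = G₂.src ⟨s, h₂⟩)

def IsoClosed (L : Set (CG Lab ar)) : Prop :=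
  ∀ G₁ G₂ : CG Lab ar, GIso G₁ G₂ → G₁ ∈ L → G₂ ∈ L

def isoClosure (L : Set (CG Lab ar)) : Set (CG Lab ar) :=
  {G | ∃ G' ∈ L, GIso G' G}

/-- `α` is a `τ`-permutation: it fixes every label outside `τ`. -/
def IsTauPerm (τ : Finset ℕ) (α : Equiv.Perm ℕ) : Prop := ∀ x, x ∉ τ → α x = x

/-- Finite permutations of the source labels. -/
def IsFinPerm (α : Equiv.Perm ℕ) : Prop := ∃ τ : Finset ℕ, IsTauPerm τ α

theorem crename_srt_subset {τ : Finset ℕ} {α : Equiv.Perm ℕ} (hα : IsTauPerm τ α)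
    {G : CG Lab ar} (h : G.srt ⊆ τ) : (crename α G).srt ⊆ τ := by
  intro x hx
  obtain ⟨y, hy, he⟩ := Finset.mem_image.mp hx
  subst he
  by_contra hc
  have h1 := hα _ hc
  rw [Equiv.apply_symm_apply] at h1
  exact hc (h1 ▸ h hy)

/-! ### Ground HR terms -/

/-- Ground terms over the HR signature. -/
inductive HRT (Lab : Type) (ar : Lab → ℕ) : Type
  | zero (τ : Finset ℕ)
  | edge (a : Lab) (s : Fin (ar a) → ℕ)
  | restrict (τ : Finset ℕ) (t : HRT Lab ar)
  | rename (α : Equiv.Perm ℕ) (hα : IsFinPerm α) (t : HRT Lab ar)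
  | comp (t₁ t₂ : HRT Lab ar)

/-- The value of a ground HR term in the graph algebra. -/
def HRT.val : HRT Lab ar → CG Lab ar
  | .zero τ => czero τ
  | .edge a s => cedge a s
  | .restrict τ t => crestrict τ t.val
  | .rename α _ t => crename α t.val
  | .comp t₁ t₂ => ccomp t₁.val t₂.val

/-- The term uses only source labels from `τ`. -/
def HRT.usesOnly (τ : Finset ℕ) : HRT Lab ar → Prop
  | .zero τ' => τ' ⊆ τ
  | .edge _ s => ∀ i, s i ∈ τ
  | .restrict τ' t => τ' ⊆ τ ∧ t.usesOnly τ
  | .rename α _ t => IsTauPerm τ α ∧ t.usesOnly τ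
  | .comp t₁ t₂ => t₁.usesOnly τ ∧ t₂.usesOnly τ

/-- The set of graphs generated by ground terms over the `τ`-restricted
HR signature (up to isomorphism). -/
def genGraphs (Lab : Type) (ar : Lab → ℕ) (τ : Finset ℕ) : Set (CG Lab ar) :=
  {G | ∃ t : HRT Lab ar, t.usesOnly τ ∧ GIso t.val G}

/-! ### HR grammars -/

/-- HR terms with nonterminal (set) variables from `N`. -/
inductive HRTV (Lab : Type) (ar : Lab → ℕ) (N : Type) : Type
  | var (X : N)
  | zero (τ : Finset ℕ)
  | edge (a : Lab) (s : Fin (ar a) → ℕ)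
  | restrict (τ : Finset ℕ) (t : HRTV Lab ar N)
  | rename (α : Equiv.Perm ℕ) (hα : IsFinPerm α) (t : HRTV Lab ar N)
  | comp (t₁ t₂ : HRTV Lab ar N)

/-- Evaluation of a term with set variables, with regard to an assignment `S`
of sets of graphs to the nonterminals. -/
def HRTV.evalSet {N : Type} (S : N → Set (CG Lab ar)) : HRTV Lab ar N → Set (CG Lab ar)
  | .var X => S X
  | .zero τ => {czero τ}
  | .edge a s => {cedge a s}
  | .restrict τ t => crestrict τ '' t.evalSet S
  | .rename α _ t => crename α '' t.evalSet S
  | .comp t₁ t₂ => {G | ∃ G₁ ∈ t₁.evalSet S, ∃ G₂ ∈ t₂.evalSet S, G = ccomp G₁ G₂}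

def HRTV.usesOnly {N : Type} (τ : Finset ℕ) : HRTV Lab ar N → Prop
  | .var _ => True
  | .zero τ' => τ' ⊆ τ
  | .edge _ s => ∀ i, s i ∈ τ
  | .restrict τ' t => τ' ⊆ τ ∧ t.usesOnly τ
  | .rename α _ t => IsTauPerm τ α ∧ t.usesOnly τ
  | .comp t₁ t₂ => t₁.usesOnly τ ∧ t₂.usesOnly τ

/-- A grammar: a finite list of rules `X → t`. -/
abbrev Grammar (Lab : Type) (ar : Lab → ℕ) (N : Type) : Type := List (N × HRTV Lab ar N)

def IsSolution {N : Type} (Γ : Grammar Lab ar N) (S : N → Set (CG Lab ar)) : Prop :=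
  ∀ r ∈ Γ, HRTV.evalSet S r.2 ⊆ S r.1

/-- The component of the least solution of `Γ` at the nonterminal `X`
(the least solution is the pointwise intersection of all solutions). -/
def langOf {N : Type} (Γ : Grammar Lab ar N) (X : N) : Set (CG Lab ar) :=
  {G | ∀ S : N → Set (CG Lab ar), IsSolution Γ S → G ∈ S X}

/-- `L` is context-free for a grammar over the `τ`-restricted HR signature. -/
def ContextFreeT (Lab : Type) (ar : Lab → ℕ) (τ : Finset ℕ) (L : Set (CG Lab ar)) : Prop :=
  ∃ (N : Type) (_ : Finite N) (Γ : Grammar Lab ar N) (X : N),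
    (∀ r ∈ Γ, HRTV.usesOnly τ r.2) ∧ L = isoClosure (langOf Γ X)

/-- `L` is context-free: a component of the least solution of a grammar of
recursive equations over HR operations. -/
def ContextFree (Lab : Type) (ar : Lab → ℕ) (L : Set (CG Lab ar)) : Prop :=
  ∃ (N : Type) (_ : Finite N) (Γ : Grammar Lab ar N) (X : N),
    L = isoClosure (langOf Γ X)

/-! ### Contexts and the syntactic congruence of the HR algebra -/

/-- First-order HR contexts: terms built from a variable (`hole`), arbitrary
graph parameters (`const`) and the HR operations. -/
inductive HRCtx (Lab : Type) (ar : Lab → ℕ) : Type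
  | hole
  | const (G : CG Lab ar)
  | zero (τ : Finset ℕ)
  | edge (a : Lab) (s : Fin (ar a) → ℕ)
  | restrict (τ : Finset ℕ) (c : HRCtx Lab ar)
  | rename (α : Equiv.Perm ℕ) (hα : IsFinPerm α) (c : HRCtx Lab ar)
  | comp (c₁ c₂ : HRCtx Lab ar)

def HRCtx.apply : HRCtx Lab ar → CG Lab ar → CG Lab ar
  | .hole, G => G
  | .const H, _ => H
  | .zero τ, _ => czero τ
  | .edge a s, _ => cedge a s
  | .restrict τ c, G => crestrict τ (c.apply G)
  | .rename α _ c, G => crename α (c.apply G)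
  | .comp c₁ c₂, G => ccomp (c₁.apply G) (c₂.apply G)

/-- The syntactic congruence of `L` in the HR graph algebra. -/
def SynCongHR (L : Set (CG Lab ar)) (G₁ G₂ : CG Lab ar) : Prop :=
  G₁.srt = G₂.srt ∧ ∀ c : HRCtx Lab ar, (c.apply G₁ ∈ L ↔ c.apply G₂ ∈ L)

/-- The context uses only source labels from `τ` (and parameters of sort `⊆ τ`). -/
def HRCtx.usesOnly (τ : Finset ℕ) : HRCtx Lab ar → Prop
  | .hole => True
  | .const G => G.srt ⊆ τ
  | .zero τ' => τ' ⊆ τ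
  | .edge _ s => ∀ i, s i ∈ τ
  | .restrict τ' c => τ' ⊆ τ ∧ c.usesOnly τ
  | .rename α _ c => IsTauPerm τ α ∧ c.usesOnly τ
  | .comp c₁ c₂ => c₁.usesOnly τ ∧ c₂.usesOnly τ

/-- The syntactic congruence of `L` in the finitely-sorted subalgebra `G^τ`. -/
def SynCongHRT (τ : Finset ℕ) (L : Set (CG Lab ar)) (G₁ G₂ : CG Lab ar) : Prop :=
  G₁.srt = G₂.srt ∧
  ∀ c : HRCtx Lab ar, c.usesOnly τ → (c.apply G₁ ∈ L ↔ c.apply G₂ ∈ L)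

/-! ### Congruence-based recognizability in the HR algebra -/

/-- A congruence of the HR graph algebra (on concrete graphs; it must contain
graph isomorphism, respect sorts and be compatible with all HR operations). -/
structure HRCongruence (Lab : Type) (ar : Lab → ℕ) : Type 1 where
  rel : CG Lab ar → CG Lab ar → Prop
  iseqv : Equivalence rel
  iso_le : ∀ G₁ G₂, GIso G₁ G₂ → rel G₁ G₂
  srt_eq : ∀ G₁ G₂, rel G₁ G₂ → G₁.srt = G₂.srt
  restrict_compat : ∀ (τ : Finset ℕ) G₁ G₂, rel G₁ G₂ →
    rel (crestrict τ G₁) (crestrict τ G₂)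
  rename_compat : ∀ (α : Equiv.Perm ℕ), IsFinPerm α → ∀ G₁ G₂, rel G₁ G₂ →
    rel (crename α G₁) (crename α G₂)
  comp_compat : ∀ G₁ G₂ H₁ H₂, rel G₁ H₁ → rel G₂ H₂ →
    rel (ccomp G₁ G₂) (ccomp H₁ H₂)

/-- Locally finite: finitely many classes of each sort. -/
def HRCongruence.LocFin (C : HRCongruence Lab ar) : Prop :=
  ∀ τ : Finset ℕ,
    Finite (Quot (fun a b : {G : CG Lab ar // G.srt = τ} => C.rel a.1 b.1))

def HRCongruence.Saturates (C : HRCongruence Lab ar) (L : Set (CG Lab ar)) : Prop :=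
  ∀ G₁ G₂, C.rel G₁ G₂ → (G₁ ∈ L ↔ G₂ ∈ L)

/-- `L` is recognizable in the HR graph algebra: saturated by a locally finite
congruence. -/
def RecogHR (L : Set (CG Lab ar)) : Prop :=
  ∃ C : HRCongruence Lab ar, C.Saturates L ∧ C.LocFin

/-- graphs of sort included in `τ` -/
abbrev CGT (Lab : Type) (ar : Lab → ℕ) (τ : Finset ℕ) : Type :=
  {G : CG Lab ar // G.srt ⊆ τ}

def subRestrict {τ : Finset ℕ} (τ' : Finset ℕ) (G : CGT Lab ar τ) : CGT Lab ar τ :=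
  ⟨crestrict τ' G.1, by rw [crestrict_srt]; exact Finset.Subset.trans Finset.inter_subset_left G.2⟩

def subRename {τ : Finset ℕ} (α : Equiv.Perm ℕ) (hα : IsTauPerm τ α)
    (G : CGT Lab ar τ) : CGT Lab ar τ :=
  ⟨crename α G.1, crename_srt_subset hα G.2⟩

def subComp {τ : Finset ℕ} (G₁ G₂ : CGT Lab ar τ) : CGT Lab ar τ :=
  ⟨ccomp G₁.1 G₂.1, by rw [ccomp_srt]; exact Finset.union_subset G₁.2 G₂.2⟩

/-- A congruence of the finitely-sorted subalgebra `G^τ`. -/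
structure HRCongruenceT (Lab : Type) (ar : Lab → ℕ) (τ : Finset ℕ) : Type 1 where
  rel : CGT Lab ar τ → CGT Lab ar τ → Prop
  iseqv : Equivalence rel
  iso_le : ∀ G₁ G₂ : CGT Lab ar τ, GIso G₁.1 G₂.1 → rel G₁ G₂
  srt_eq : ∀ G₁ G₂ : CGT Lab ar τ, rel G₁ G₂ → G₁.1.srt = G₂.1.srt
  restrict_compat : ∀ (τ' : Finset ℕ), τ' ⊆ τ → ∀ G₁ G₂, rel G₁ G₂ →
    rel (subRestrict τ' G₁) (subRestrict τ' G₂)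
  rename_compat : ∀ (α : Equiv.Perm ℕ) (hα : IsTauPerm τ α), ∀ G₁ G₂, rel G₁ G₂ →
    rel (subRename α hα G₁) (subRename α hα G₂)
  comp_compat : ∀ G₁ G₂ H₁ H₂, rel G₁ H₁ → rel G₂ H₂ →
    rel (subComp G₁ G₂) (subComp H₁ H₂)

/-- `L` is recognizable in the finitely-sorted subalgebra `G^τ`: saturated by a
congruence of `G^τ` with finitely many classes. -/
def RecogHRT (τ : Finset ℕ) (L : Set (CG Lab ar)) : Prop :=
  ∃ C : HRCongruenceT Lab ar τ,
    (∀ G₁ G₂ : CGT Lab ar τ, C.rel G₁ G₂ → (G₁.1 ∈ L ↔ G₂.1 ∈ L)) ∧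
    Finite (Quot C.rel)

/-! ### Tree decompositions and tree-width -/

/-- A tree decomposition of a concrete graph `G`. -/
structure TreeDecomp (G : CG Lab ar) : Type 1 where
  ι : Type
  finι : Finite ι
  T : SimpleGraph ι
  isTree : T.IsTree
  root : ι
  bag : ι → Finset (Fin G.n)
  edges_covered : ∀ e : Fin G.m, ∃ x : ι, ∀ i, (G.edg e).2 i ∈ bag x
  vert_connected : ∀ v : Fin G.n, (T.induce {x : ι | v ∈ bag x}).Connected
  root_bag : ∀ s : {s : ℕ // s ∈ G.srt}, G.src s ∈ bag root

/-- `G` has tree-width at most `k`: it has a tree decomposition all of whose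
bags have at most `k+1` elements. -/
def TWle (G : CG Lab ar) (k : ℕ) : Prop :=
  ∃ td : TreeDecomp G, ∀ x, (td.bag x).card ≤ k + 1

/-! ### Trees -/

/-- Terms denoting trees over an alphabet `B1` of unary and `B2` of binary
edge labels: constants for unary labels, the `append` operations for binary
labels, and root-fusing composition. -/
inductive TTerm (B1 B2 : Type) : Type
  | leaf (c : B1)
  | append (b : B2) (t : TTerm B1 B2)
  | comp (t₁ t₂ : TTerm B1 B2)

/-- Arity function for tree edge labels. -/
def tAr {B1 B2 : Type} : B1 ⊕ B2 → ℕ := Sum.elim (fun _ => 1) (fun _ => 2)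

/-- The tree (as a graph with root source `0`) denoted by a tree term. -/
def treeEval {B1 B2 : Type} : TTerm B1 B2 → CG (B1 ⊕ B2) tAr
  | .leaf c => cedge (Sum.inl c) (fun _ => 0)
  | .append b t => crename (Equiv.swap 0 1)
      (crestrict {1} (ccomp (cedge (Sum.inr b) ![1, 0]) (treeEval t)))
  | .comp t₁ t₂ => ccomp (treeEval t₁) (treeEval t₂)

/-- Two tree terms denote the same tree. -/
def SameTree {B1 B2 : Type} (t u : TTerm B1 B2) : Prop :=
  GIso (treeEval t) (treeEval u)

/-- The height of (the tree denoted by) a tree term. -/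
def TTerm.height {B1 B2 : Type} : TTerm B1 B2 → ℕ
  | .leaf _ => 0
  | .append _ t => t.height + 1
  | .comp t₁ t₂ => max t₁.height t₂.height

/-- Iterated composition `x ∥ l₁ ∥ … ∥ l_n`. -/
def compList {B1 B2 : Type} (x : TTerm B1 B2) (l : List (TTerm B1 B2)) : TTerm B1 B2 :=
  l.foldl TTerm.comp x

/-- Equality of tree terms up to commutativity and associativity of `∥`. -/
inductive ACeq {B1 B2 : Type} : TTerm B1 B2 → TTerm B1 B2 → Prop
  | refl (t) : ACeq t t
  | symm {t u} : ACeq t u → ACeq u t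
  | trans {t u v} : ACeq t u → ACeq u v → ACeq t v
  | comm (t u) : ACeq (.comp t u) (.comp u t)
  | assoc (t u v) : ACeq (.comp (.comp t u) v) (.comp t (.comp u v))
  | congr_append (b) {t u} : ACeq t u → ACeq (.append b t) (.append b u)
  | congr_comp {t u t' u'} : ACeq t t' → ACeq u u' → ACeq (.comp t u) (.comp t' u')

/-! ### Parse trees -/

/-- Unary parse-tree edge labels: the HR constants. -/
inductive PUn (Lab : Type) (ar : Lab → ℕ) : Type
  | zero (τ : Finset ℕ)
  | edge (a : Lab) (s : Fin (ar a) → ℕ)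

/-- Binary parse-tree edge labels: restriction and renaming. -/
inductive PBin : Type
  | restrict (τ : Finset ℕ)
  | rename (α : Equiv.Perm ℕ) (hα : IsFinPerm α)

/-- Parse trees (as tree terms over the parse alphabet). -/
abbrev PTerm (Lab : Type) (ar : Lab → ℕ) : Type := TTerm (PUn Lab ar) PBin

/-- The canonical evaluation of a parse tree: interpret the edge labels as HR
operations in the graph algebra. -/
def pval : PTerm Lab ar → CG Lab ar
  | .leaf (.zero τ) => czero τ
  | .leaf (.edge a s) => cedge a s
  | .append (.restrict τ) t => crestrict τ (pval t)
  | .append (.rename α _) t => crename α (pval t)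
  | .comp t₁ t₂ => ccomp (pval t₁) (pval t₂)

/-- The unary parse label uses only sources from `τ`. -/
def PUnOK (τ : Finset ℕ) : PUn Lab ar → Prop
  | .zero τ' => τ' ⊆ τ
  | .edge _ s => ∀ i, s i ∈ τ

/-- The binary parse label uses only sources from `τ`. -/
def PBinOK (τ : Finset ℕ) : PBin → Prop
  | .restrict τ' => τ' ⊆ τ
  | .rename α _ => IsTauPerm τ α

/-- The `τ`-restricted parse alphabet (unary part). -/
abbrev PUnT (Lab : Type) (ar : Lab → ℕ) (τ : Finset ℕ) : Type := {u : PUn Lab ar // PUnOK τ u}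
/-- The `τ`-restricted parse alphabet (binary part). -/
abbrev PBinT (τ : Finset ℕ) : Type := {b : PBin // PBinOK τ b}
/-- Parse trees over the `τ`-restricted parse alphabet. -/
abbrev PTermT (Lab : Type) (ar : Lab → ℕ) (τ : Finset ℕ) : Type :=
  TTerm (PUnT Lab ar τ) (PBinT τ)

/-- Relabeling of tree terms. -/
def TTerm.mapL {B1 B2 B1' B2' : Type} (f : B1 → B1') (g : B2 → B2') :
    TTerm B1 B2 → TTerm B1' B2'
  | .leaf c => .leaf (f c)
  | .append b t => .append (g b) (t.mapL f g)
  | .comp t₁ t₂ => .comp (t₁.mapL f g) (t₂.mapL f g)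

/-- Inclusion of `τ`-restricted parse trees into all parse trees. -/
def ptInj {τ : Finset ℕ} (t : PTermT Lab ar τ) : PTerm Lab ar :=
  t.mapL Subtype.val Subtype.val

/-! ### Recognizability for sets of (parse) trees -/

/-- A congruence of the tree algebra `T(B_parse)` (over the universe of parse
trees): contains `SameTree` and is compatible with all tree operations. -/
structure TCong (B1 B2 : Type) : Type 1 where
  rel : TTerm B1 B2 → TTerm B1 B2 → Prop
  iseqv : Equivalence rel
  same_le : ∀ t u, SameTree t u → rel t u
  append_compat : ∀ (b : B2) t u, rel t u → rel (.append b t) (.append b u)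
  comp_compat : ∀ t₁ t₂ u₁ u₂, rel t₁ u₁ → rel t₂ u₂ →
    rel (.comp t₁ t₂) (.comp u₁ u₂)

/-- `K` is recognizable in the tree algebra. -/
def RecogTree {B1 B2 : Type} (K : Set (TTerm B1 B2)) : Prop :=
  ∃ C : TCong B1 B2, (∀ t u, C.rel t u → (t ∈ K ↔ u ∈ K)) ∧ Finite (Quot C.rel)

/-- A congruence of the algebra of parse trees `P` (the HR signature
interpreted over trees): contains `SameTree` and is compatible with the
HR operations on trees. -/
structure PCong (Lab : Type) (ar : Lab → ℕ) : Type 1 where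
  rel : PTerm Lab ar → PTerm Lab ar → Prop
  iseqv : Equivalence rel
  same_le : ∀ t u, SameTree t u → rel t u
  restrict_compat : ∀ (τ : Finset ℕ) t u, rel t u →
    rel (.append (PBin.restrict τ) t) (.append (PBin.restrict τ) u)
  rename_compat : ∀ (α : Equiv.Perm ℕ) (hα : IsFinPerm α) t u, rel t u →
    rel (.append (PBin.rename α hα) t) (.append (PBin.rename α hα) u)
  comp_compat : ∀ t₁ t₂ u₁ u₂, rel t₁ u₁ → rel t₂ u₂ →
    rel (.comp t₁ t₂) (.comp u₁ u₂)

/-- `K` is recognizable in the algebra of parse trees. -/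
def RecogP (K : Set (PTerm Lab ar)) : Prop :=
  ∃ C : PCong Lab ar, (∀ t u, C.rel t u → (t ∈ K ↔ u ∈ K)) ∧ Finite (Quot C.rel)

/-! ### Auxiliary material for Statement 10 -/

section Aux

private lemma isFinPerm_one : IsFinPerm (1 : Equiv.Perm ℕ) := ⟨∅, fun _ _ => rfl⟩

private lemma isFinPerm_mul {α β : Equiv.Perm ℕ} (hα : IsFinPerm α) (hβ : IsFinPerm β) :
    IsFinPerm (α * β) := by
  obtain ⟨s, hs⟩ := hα; obtain ⟨t, ht⟩ := hβ
  refine ⟨s ∪ t, fun x hx => ?_⟩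
  have h1 := ht x (fun h => hx (Finset.mem_union_right _ h))
  have h2 := hs x (fun h => hx (Finset.mem_union_left _ h))
  simp [Equiv.Perm.mul_apply, h1, h2]

private lemma isFinPerm_symm {α : Equiv.Perm ℕ} (hα : IsFinPerm α) : IsFinPerm α.symm := by
  obtain ⟨s, hs⟩ := hα
  refine ⟨s, fun x hx => ?_⟩
  nth_rewrite 1 [← hs x hx]
  exact α.symm_apply_apply x

private lemma exists_fresh_perm (C D : Finset ℕ) :
    ∃ (γ : Equiv.Perm ℕ) (T : Finset ℕ), IsTauPerm T γ ∧
      (∀ x ∈ C, γ x ∉ D) ∧ (∀ x, x ∉ C → x ∈ D → γ x = x) := by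
  classical
  induction C using Finset.induction_on with
  | empty => exact ⟨1, ∅, fun _ _ => rfl, by simp, fun _ _ _ => rfl⟩
  | @insert a C ha IH =>
    obtain ⟨γ, T, hT, hC, hfix⟩ := IH
    obtain ⟨f, hf⟩ := Infinite.exists_notMem_finset (T ∪ D ∪ insert a C)
    simp only [Finset.mem_union, not_or] at hf
    obtain ⟨⟨hfT, hfD⟩, hfC⟩ := hf
    refine ⟨γ * Equiv.swap a f, T ∪ {a, f}, ?_, ?_, ?_⟩
    · intro x hx
      simp only [Finset.mem_union, Finset.mem_insert, Finset.mem_singleton, not_or] at hx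
      obtain ⟨hxT, hxa, hxf⟩ := hx
      rw [Equiv.Perm.mul_apply, Equiv.swap_apply_of_ne_of_ne hxa hxf]
      exact hT x hxT
    · intro x hx
      rcases Finset.mem_insert.mp hx with rfl | hxC
      · rw [Equiv.Perm.mul_apply, Equiv.swap_apply_left, hT f hfT]
        exact hfD
      · have hxa : x ≠ a := fun h => ha (h ▸ hxC)
        have hxf : x ≠ f := fun h => hfC (h ▸ Finset.mem_insert_of_mem hxC)
        rw [Equiv.Perm.mul_apply, Equiv.swap_apply_of_ne_of_ne hxa hxf]
        exact hC x hxC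
    · intro x hx hxD
      have hxa : x ≠ a := fun h => hx (h ▸ Finset.mem_insert_self a C)
      have hxf : x ≠ f := fun h => hfD (h ▸ hxD)
      rw [Equiv.Perm.mul_apply, Equiv.swap_apply_of_ne_of_ne hxa hxf]
      exact hfix x (fun h => hx (Finset.mem_insert_of_mem h)) hxD

/-! #### A Sigma-equation reformulation of `GIso` -/

private def GIso' (G₁ G₂ : CG Lab ar) : Prop :=
  G₁.srt = G₂.srt ∧
  ∃ (ev : Fin G₁.n ≃ Fin G₂.n) (ee : Fin G₁.m ≃ Fin G₂.m),
    (∀ e, G₂.edg (ee e) = ⟨(G₁.edg e).1, fun i => ev ((G₁.edg e).2 i)⟩) ∧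
    (∀ (s : ℕ) (h₁ : s ∈ G₁.srt) (h₂ : s ∈ G₂.srt),
      ev (G₁.src ⟨s, h₁⟩) = G₂.src ⟨s, h₂⟩)

private lemma giso_iff {G₁ G₂ : CG Lab ar} : GIso G₁ G₂ ↔ GIso' G₁ G₂ := by
  unfold GIso GIso'
  refine and_congr_right fun _ => ?_
  refine exists_congr fun ev => exists_congr fun ee => and_congr_left fun _ => ?_
  refine forall_congr' fun e => ?_
  rw [Sigma.ext_iff]

private lemma giso'_refl (G : CG Lab ar) : GIso' G G :=
  ⟨rfl, Equiv.refl _, Equiv.refl _, fun _ => rfl, fun _ _ _ => rfl⟩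

private lemma giso'_symm {G₁ G₂ : CG Lab ar} (h : GIso' G₁ G₂) : GIso' G₂ G₁ := by
  obtain ⟨hsrt, ev, ee, hedg, hsrc⟩ := h
  refine ⟨hsrt.symm, ev.symm, ee.symm, fun e => ?_, fun s h₂ h₁ => ?_⟩
  · have h := hedg (ee.symm e)
    rw [ee.apply_symm_apply] at h
    rw [h]
    simp
  · rw [← hsrc s h₁ h₂, ev.symm_apply_apply]

private lemma giso'_trans {G₁ G₂ G₃ : CG Lab ar} (h : GIso' G₁ G₂) (h' : GIso' G₂ G₃) :
    GIso' G₁ G₃ := by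
  obtain ⟨hs, ev, ee, he, hc⟩ := h; obtain ⟨hs', ev', ee', he', hc'⟩ := h'
  refine ⟨hs.trans hs', ev.trans ev', ee.trans ee', fun e => ?_, fun s h₁ h₃ => ?_⟩
  · have t := he' (ee e)
    rw [he e] at t
    simpa using t
  · have h₂ : s ∈ G₂.srt := hs ▸ h₁
    simp [Equiv.trans_apply, hc s h₁ h₂, hc' s h₂ h₃]

/-! #### Easy isomorphisms (same underlying graph) -/

private lemma giso'_mk {n m : ℕ} {edg : Fin m → (a : Lab) × (Fin (ar a) → Fin n)}
    {srt₁ srt₂ : Finset ℕ} {src₁ : {s : ℕ // s ∈ srt₁} → Fin n}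
    {src₂ : {s : ℕ // s ∈ srt₂} → Fin n}
    (h : srt₁ = srt₂)
    (hsrc : ∀ (s : ℕ) (h₁ : s ∈ srt₁) (h₂ : s ∈ srt₂), src₁ ⟨s, h₁⟩ = src₂ ⟨s, h₂⟩) :
    GIso' (⟨n, m, edg, srt₁, src₁⟩ : CG Lab ar) ⟨n, m, edg, srt₂, src₂⟩ :=
  ⟨h, Equiv.refl _, Equiv.refl _, fun _ => rfl, hsrc⟩

private lemma restrict_rename_giso (τ : Finset ℕ) (β : Equiv.Perm ℕ) (X : CG Lab ar) :
    GIso' (crestrict τ (crename β X)) (crename β (crestrict (τ.image β) X)) := by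
  refine giso'_mk ?_ (fun s h₁ h₂ => rfl)
  show Finset.image (⇑β.symm) X.srt ∩ τ = Finset.image (⇑β.symm) (X.srt ∩ Finset.image (⇑β) τ)
  rw [Finset.image_inter _ _ β.symm.injective, Finset.image_image]
  congr 1
  ext x
  simp

private lemma rename_restrict_giso (β : Equiv.Perm ℕ) (τ : Finset ℕ) (X : CG Lab ar) :
    GIso' (crename β (crestrict τ X)) (crestrict (τ.image β.symm) (crename β X)) := by
  refine giso'_mk ?_ (fun s h₁ h₂ => rfl)
  exact Finset.image_inter _ _ β.symm.injective

private lemma rename_rename_giso (α β : Equiv.Perm ℕ) (X : CG Lab ar) :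
    GIso' (crename α (crename β X)) (crename (β * α) X) := by
  refine giso'_mk ?_ (fun s h₁ h₂ => rfl)
  show Finset.image (⇑α.symm) (Finset.image (⇑β.symm) X.srt) = Finset.image (⇑(β * α).symm) X.srt
  rw [Finset.image_image]
  have : ⇑(β * α).symm = ⇑α.symm ∘ ⇑β.symm := by
    funext x
    simp [Equiv.Perm.mul_def, Equiv.symm_trans_apply]
  rw [this]

private lemma rename_fix_giso (β : Equiv.Perm ℕ) (X : CG Lab ar)
    (hfix : ∀ x ∈ X.srt, β x = x) : GIso' (crename β X) X := by
  have hfix' : ∀ x ∈ X.srt, β.symm x = x := fun x hx => by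
    conv_lhs => rw [← hfix x hx]
    exact β.symm_apply_apply x
  refine giso'_mk ?_ (fun s h₁ h₂ => ?_)
  · show Finset.image (⇑β.symm) X.srt = X.srt
    ext x
    simp only [Finset.mem_image]
    constructor
    · rintro ⟨y, hy, rfl⟩; rwa [hfix' y hy]
    · intro hx; exact ⟨x, hx, hfix' x hx⟩
  · show X.src ⟨β s, _⟩ = X.src ⟨s, h₂⟩
    exact congrArg X.src (Subtype.ext (hfix s h₂))

private lemma rename_one_giso (X : CG Lab ar) : GIso' (crename 1 X) X :=
  rename_fix_giso 1 X (fun _ _ => rfl)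

private lemma restrict_restrict_giso (σ τ : Finset ℕ) (X : CG Lab ar) :
    GIso' (crestrict τ (crestrict σ X)) (crestrict (σ ∩ τ) X) := by
  refine giso'_mk ?_ (fun s h₁ h₂ => rfl)
  exact Finset.inter_assoc _ _ _

private lemma restrict_of_subset_giso {τ : Finset ℕ} {X : CG Lab ar} (h : X.srt ⊆ τ) :
    GIso' (crestrict τ X) X := by
  refine giso'_mk ?_ (fun s h₁ h₂ => rfl)
  exact Finset.inter_eq_left.mpr h

/-! #### Congruence of `GIso'` with the operations -/

private lemma giso'_crename (α : Equiv.Perm ℕ) {X Y : CG Lab ar} (h : GIso' X Y) :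
    GIso' (crename α X) (crename α Y) := by
  obtain ⟨hs, ev, ee, he, hc⟩ := h
  refine ⟨by rw [crename_srt, crename_srt, hs], ev, ee, he, fun s h₁ h₂ => ?_⟩
  have hx : α s ∈ X.srt := by
    obtain ⟨y, hy, hys⟩ := Finset.mem_image.mp h₁
    rw [← hys, Equiv.apply_symm_apply]; exact hy
  have hy : α s ∈ Y.srt := hs ▸ hx
  exact hc (α s) hx hy

private lemma giso'_crestrict (τ : Finset ℕ) {X Y : CG Lab ar} (h : GIso' X Y) :
    GIso' (crestrict τ X) (crestrict τ Y) := by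
  obtain ⟨hs, ev, ee, he, hc⟩ := h
  refine ⟨by rw [crestrict_srt, crestrict_srt, hs], ev, ee, he, fun s h₁ h₂ => ?_⟩
  exact hc s (Finset.mem_inter.mp h₁).1 (Finset.mem_inter.mp h₂).1

/-! #### Tools for `ccomp` -/

private def quotCongr {α β : Type} (e : α ≃ β) {r : α → α → Prop} {s : β → β → Prop}
    (h : ∀ x y, r x y → Quot.mk s (e x) = Quot.mk s (e y))
    (h' : ∀ x y, s x y → Quot.mk r (e.symm x) = Quot.mk r (e.symm y)) :
    Quot r ≃ Quot s where
  toFun := Quot.lift (fun x => Quot.mk s (e x)) h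
  invFun := Quot.lift (fun x => Quot.mk r (e.symm x)) h'
  left_inv := by intro q; induction q using Quot.ind with | _ x => simp
  right_inv := by intro q; induction q using Quot.ind with | _ x => simp

private def quotTriv {α : Type} (r : α → α → Prop) (h : ∀ x y, r x y → False) :
    Quot r ≃ α where
  toFun := Quot.lift id (fun x y hr => (h x y hr).elim)
  invFun := Quot.mk r
  left_inv := by intro q; induction q using Quot.ind with | _ x => rfl
  right_inv := fun _ => rfl

private def cE (A B : CG Lab ar) : Quot (fuseRel A B) ≃ Fin ((ccomp A B).n) :=
  Finite.equivFin _

@[simp] private lemma quotCongr_mk {α β : Type} (e : α ≃ β) {r : α → α → Prop}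
    {s : β → β → Prop} (h h') (x : α) :
    quotCongr e h h' (Quot.mk r x) = Quot.mk s (e x) := rfl

@[simp] private lemma crename_edg (β : Equiv.Perm ℕ) (X : CG Lab ar) :
    (crename β X).edg = X.edg := rfl

@[simp] private lemma crestrict_edg (τ : Finset ℕ) (X : CG Lab ar) :
    (crestrict τ X).edg = X.edg := rfl

private lemma crename_src_def (β : Equiv.Perm ℕ) (X : CG Lab ar) (s : ℕ)
    (hs : s ∈ (crename β X).srt) (hs' : β s ∈ X.srt) :
    (crename β X).src ⟨s, hs⟩ = X.src ⟨β s, hs'⟩ := rfl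

private lemma crestrict_src_def (τ : Finset ℕ) (X : CG Lab ar) (s : ℕ)
    (hs : s ∈ (crestrict τ X).srt) (hs' : s ∈ X.srt) :
    (crestrict τ X).src ⟨s, hs⟩ = X.src ⟨s, hs'⟩ := rfl

private lemma mem_of_mem_crename {β : Equiv.Perm ℕ} {X : CG Lab ar} {s : ℕ}
    (hs : s ∈ (crename β X).srt) : β s ∈ X.srt := by
  obtain ⟨y, hy, he⟩ := Finset.mem_image.mp hs
  rw [← he, Equiv.apply_symm_apply]
  exact hy

private lemma mem_crename_of_mem {β : Equiv.Perm ℕ} {X : CG Lab ar} {s : ℕ}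
    (hs : β s ∈ X.srt) : s ∈ (crename β X).srt :=
  Finset.mem_image.mpr ⟨β s, hs, β.symm_apply_apply s⟩

private lemma ccomp_edg_def (A B : CG Lab ar) (i : Fin (A.m + B.m)) :
    (ccomp A B).edg i =
      match finSumFinEquiv.symm i with
      | Sum.inl e₁ => ⟨(A.edg e₁).1, fun j => cE A B (Quot.mk _ (Sum.inl ((A.edg e₁).2 j)))⟩
      | Sum.inr e₂ => ⟨(B.edg e₂).1, fun j => cE A B (Quot.mk _ (Sum.inr ((B.edg e₂).2 j)))⟩ :=
  rfl

private lemma ccomp_src_def (A B : CG Lab ar) (s : ℕ) (hs : s ∈ A.srt ∪ B.srt) :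
    (ccomp A B).src ⟨s, hs⟩ =
      if h : s ∈ A.srt then cE A B (Quot.mk _ (Sum.inl (A.src ⟨s, h⟩)))
      else cE A B (Quot.mk _ (Sum.inr (B.src ⟨s, (Finset.mem_union.mp hs).resolve_left h⟩))) :=
  rfl

private def edgSum (A B : CG Lab ar) :
    (Fin A.m ⊕ Fin B.m) → (a : Lab) × (Fin (ar a) → Quot (fuseRel A B))
  | .inl e₁ => ⟨(A.edg e₁).1, fun j => Quot.mk _ (Sum.inl ((A.edg e₁).2 j))⟩
  | .inr e₂ => ⟨(B.edg e₂).1, fun j => Quot.mk _ (Sum.inr ((B.edg e₂).2 j))⟩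

private def srcSum (A B : CG Lab ar) : {s : ℕ // s ∈ A.srt ∪ B.srt} → Quot (fuseRel A B) :=
  fun s =>
    if h : s.1 ∈ A.srt then Quot.mk _ (Sum.inl (A.src ⟨s.1, h⟩))
    else Quot.mk _ (Sum.inr (B.src ⟨s.1, (Finset.mem_union.mp s.2).resolve_left h⟩))

private lemma ccomp_edg_eq (A B : CG Lab ar) (e : Fin (A.m + B.m)) :
    (ccomp A B).edg e = ⟨(edgSum A B (finSumFinEquiv.symm e)).1,
      fun j => cE A B ((edgSum A B (finSumFinEquiv.symm e)).2 j)⟩ := by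
  rw [ccomp_edg_def]
  rcases hd : finSumFinEquiv.symm e with e₁ | e₂ <;> rfl

private lemma ccomp_src_eq (A B : CG Lab ar) (s : ℕ) (hs : s ∈ A.srt ∪ B.srt) :
    (ccomp A B).src ⟨s, hs⟩ = cE A B (srcSum A B ⟨s, hs⟩) := by
  rw [ccomp_src_def]
  unfold srcSum
  by_cases h : s ∈ A.srt
  · rw [dif_pos h, dif_pos h]
  · rw [dif_neg h, dif_neg h]

private lemma srcSum_pos (A B : CG Lab ar) {s : ℕ} (hs : s ∈ A.srt ∪ B.srt)
    (h : s ∈ A.srt) : srcSum A B ⟨s, hs⟩ = Quot.mk _ (Sum.inl (A.src ⟨s, h⟩)) := by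
  unfold srcSum
  rw [dif_pos h]

private lemma srcSum_neg (A B : CG Lab ar) {s : ℕ} (hs : s ∈ A.srt ∪ B.srt)
    (h : s ∉ A.srt) (h' : s ∈ B.srt) :
    srcSum A B ⟨s, hs⟩ = Quot.mk _ (Sum.inr (B.src ⟨s, h'⟩)) := by
  unfold srcSum
  rw [dif_neg h]

private lemma giso'_from_ccomp {A B Y : CG Lab ar}
    (q : Quot (fuseRel A B) → Fin Y.n) (hq : Function.Bijective q)
    (f : (Fin A.m ⊕ Fin B.m) → Fin Y.m) (hf : Function.Bijective f)
    (hsrt : A.srt ∪ B.srt = Y.srt)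
    (hedg : ∀ u, Y.edg (f u) = ⟨(edgSum A B u).1, fun i => q ((edgSum A B u).2 i)⟩)
    (hsrc : ∀ (s : ℕ) (h₁ : s ∈ A.srt ∪ B.srt) (h₂ : s ∈ Y.srt),
      q (srcSum A B ⟨s, h₁⟩) = Y.src ⟨s, h₂⟩) :
    GIso' (ccomp A B) Y := by
  refine ⟨by rw [ccomp_srt, hsrt], (cE A B).symm.trans (Equiv.ofBijective q hq),
    finSumFinEquiv.symm.trans (Equiv.ofBijective f hf), fun e => ?_, fun s h₁ h₂ => ?_⟩
  · refine Eq.trans (hedg (finSumFinEquiv.symm e)) ?_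
    rw [ccomp_edg_eq A B e]
    refine congrArg (Sigma.mk _) (funext fun i => ?_)
    exact (congrArg q ((cE A B).symm_apply_apply _)).symm
  · refine Eq.trans ?_ (hsrc s h₁ h₂)
    rw [ccomp_src_eq A B s h₁]
    exact congrArg q ((cE A B).symm_apply_apply _)

private lemma giso'_ccomp {A B A' B' : CG Lab ar} (hA : GIso' A A') (hB : GIso' B B') :
    GIso' (ccomp A B) (ccomp A' B') := by
  obtain ⟨hsA, evA, eeA, heA, hcA⟩ := hA
  obtain ⟨hsB, evB, eeB, heB, hcB⟩ := hB
  have hq1 : ∀ x y, fuseRel A B x y →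
      Quot.mk (fuseRel A' B') ((Equiv.sumCongr evA evB) x) =
      Quot.mk (fuseRel A' B') ((Equiv.sumCongr evA evB) y) := by
    rintro _ _ ⟨s, h₁, h₂, rfl, rfl⟩
    simp only [Equiv.sumCongr_apply, Sum.map_inl, Sum.map_inr]
    rw [hcA s h₁ (hsA ▸ h₁), hcB s h₂ (hsB ▸ h₂)]
    exact Quot.sound ⟨s, hsA ▸ h₁, hsB ▸ h₂, rfl, rfl⟩
  have hq2 : ∀ x y, fuseRel A' B' x y →
      Quot.mk (fuseRel A B) ((Equiv.sumCongr evA evB).symm x) =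
      Quot.mk (fuseRel A B) ((Equiv.sumCongr evA evB).symm y) := by
    rintro _ _ ⟨s, h₁, h₂, rfl, rfl⟩
    simp only [Equiv.sumCongr_symm, Equiv.sumCongr_apply, Sum.map_inl, Sum.map_inr]
    have e1 : evA.symm (A'.src ⟨s, h₁⟩) = A.src ⟨s, hsA ▸ h₁⟩ := by
      rw [Equiv.symm_apply_eq, hcA s (hsA ▸ h₁) h₁]
    have e2 : evB.symm (B'.src ⟨s, h₂⟩) = B.src ⟨s, hsB ▸ h₂⟩ := by
      rw [Equiv.symm_apply_eq, hcB s (hsB ▸ h₂) h₂]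
    rw [e1, e2]
    exact Quot.sound ⟨s, hsA ▸ h₁, hsB ▸ h₂, rfl, rfl⟩
  refine giso'_from_ccomp
    (⇑((quotCongr (Equiv.sumCongr evA evB) hq1 hq2).trans (cE A' B')))
    (((quotCongr (Equiv.sumCongr evA evB) hq1 hq2).trans (cE A' B')).bijective)
    (⇑((Equiv.sumCongr eeA eeB).trans (finSumFinEquiv (m := A'.m) (n := B'.m))))
    (((Equiv.sumCongr eeA eeB).trans (finSumFinEquiv (m := A'.m) (n := B'.m))).bijective)
    (by rw [ccomp_srt, hsA, hsB]) (fun u => ?_) (fun s h₁ h₂ => ?_)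
  · cases u with
    | inl e₁ =>
      simp only [Equiv.trans_apply, Equiv.sumCongr_apply, Sum.map_inl]
      rw [ccomp_edg_eq A' B' _, Equiv.symm_apply_apply]
      simp only [edgSum, quotCongr_mk, Equiv.sumCongr_apply, Sum.map_inl]
      rw [heA e₁]
    | inr e₂ =>
      simp only [Equiv.trans_apply, Equiv.sumCongr_apply, Sum.map_inr]
      rw [ccomp_edg_eq A' B' _, Equiv.symm_apply_apply]
      simp only [edgSum, quotCongr_mk, Equiv.sumCongr_apply, Sum.map_inr]
      rw [heB e₂]
  · rw [ccomp_src_eq A' B' s h₂]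
    by_cases hs : s ∈ A.srt
    · rw [srcSum_pos A B h₁ hs, srcSum_pos A' B' h₂ (hsA ▸ hs)]
      simp only [Equiv.trans_apply, quotCongr_mk, Equiv.sumCongr_apply, Sum.map_inl,
        hcA s hs (hsA ▸ hs)]
    · have hsB' : s ∈ B.srt := (Finset.mem_union.mp h₁).resolve_left hs
      rw [srcSum_neg A B h₁ hs hsB', srcSum_neg A' B' h₂ (fun h => hs (hsA ▸ h)) (hsB ▸ hsB')]
      simp only [Equiv.trans_apply, quotCongr_mk, Equiv.sumCongr_apply, Sum.map_inr,
        hcB s hsB' (hsB ▸ hsB')]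

private lemma ccomp_restrict_fresh (τ' : Finset ℕ) (X G : CG Lab ar)
    (h : X.srt ∩ G.srt ⊆ τ') :
    GIso' (ccomp (crestrict τ' X) G)
          (crestrict ((X.srt ∩ τ') ∪ G.srt) (ccomp X G)) := by
  have hq1 : ∀ x y, fuseRel (crestrict τ' X) G x y →
      Quot.mk (fuseRel X G) ((Equiv.refl (Fin X.n ⊕ Fin G.n)) x) =
      Quot.mk (fuseRel X G) ((Equiv.refl (Fin X.n ⊕ Fin G.n)) y) := by
    rintro _ _ ⟨s, h₁, h₂, rfl, rfl⟩
    exact Quot.sound ⟨s, (Finset.mem_inter.mp h₁).1, h₂, rfl, rfl⟩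
  have hq2 : ∀ x y, fuseRel X G x y →
      Quot.mk (fuseRel (crestrict τ' X) G) ((Equiv.refl (Fin X.n ⊕ Fin G.n)).symm x) =
      Quot.mk (fuseRel (crestrict τ' X) G) ((Equiv.refl (Fin X.n ⊕ Fin G.n)).symm y) := by
    rintro _ _ ⟨s, h₁, h₂, rfl, rfl⟩
    have hsτ : s ∈ τ' := h (Finset.mem_inter.mpr ⟨h₁, h₂⟩)
    exact Quot.sound ⟨s, Finset.mem_inter.mpr ⟨h₁, hsτ⟩, h₂, rfl, rfl⟩
  refine giso'_from_ccomp
    (⇑((quotCongr (Equiv.refl (Fin X.n ⊕ Fin G.n)) hq1 hq2).trans (cE X G)))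
    (((quotCongr (Equiv.refl (Fin X.n ⊕ Fin G.n)) hq1 hq2).trans (cE X G)).bijective)
    (⇑(finSumFinEquiv (m := X.m) (n := G.m)))
    ((finSumFinEquiv (m := X.m) (n := G.m)).bijective)
    ?_ (fun u => ?_) (fun s h₁ h₂ => ?_)
  · show (X.srt ∩ τ') ∪ G.srt = (X.srt ∪ G.srt) ∩ ((X.srt ∩ τ') ∪ G.srt)
    ext a
    simp only [Finset.mem_inter, Finset.mem_union]
    tauto
  · show (ccomp X G).edg (finSumFinEquiv u) = _
    rw [ccomp_edg_eq X G _]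
    erw [Equiv.symm_apply_apply]
    cases u with
    | inl e₁ =>
      simp only [edgSum, crestrict_edg, Equiv.trans_apply, quotCongr_mk, Equiv.refl_apply]
      rfl
    | inr e₂ =>
      simp only [edgSum, crestrict_edg, Equiv.trans_apply, quotCongr_mk, Equiv.refl_apply]
      rfl
  · rw [crestrict_src_def _ _ _ h₂ (Finset.mem_inter.mp h₂).1,
      ccomp_src_eq X G s (Finset.mem_inter.mp h₂).1]
    by_cases hs : s ∈ (crestrict τ' X).srt
    · have hsX : s ∈ X.srt := (Finset.mem_inter.mp hs).1
      rw [srcSum_pos (crestrict τ' X) G h₁ hs, srcSum_pos X G (Finset.mem_inter.mp h₂).1 hsX]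
      rfl
    · have hsG : s ∈ G.srt := (Finset.mem_union.mp h₁).resolve_left hs
      have hsX : s ∉ X.srt := by
        intro hX
        exact hs (Finset.mem_inter.mpr ⟨hX, h (Finset.mem_inter.mpr ⟨hX, hsG⟩)⟩)
      rw [srcSum_neg (crestrict τ' X) G h₁ hs hsG,
        srcSum_neg X G (Finset.mem_inter.mp h₂).1 hsX hsG]
      rfl

private lemma rename_ccomp_giso (β : Equiv.Perm ℕ) (A B : CG Lab ar) :
    GIso' (crename β (ccomp A B)) (ccomp (crename β A) (crename β B)) := by
  apply giso'_symm
  have hq1 : ∀ x y, fuseRel (crename β A) (crename β B) x y →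
      Quot.mk (fuseRel A B) ((Equiv.refl (Fin A.n ⊕ Fin B.n)) x) =
      Quot.mk (fuseRel A B) ((Equiv.refl (Fin A.n ⊕ Fin B.n)) y) := by
    rintro _ _ ⟨s, h₁, h₂, rfl, rfl⟩
    exact Quot.sound ⟨β s, mem_of_mem_crename h₁, mem_of_mem_crename h₂, rfl, rfl⟩
  have hq2 : ∀ x y, fuseRel A B x y →
      Quot.mk (fuseRel (crename β A) (crename β B)) ((Equiv.refl (Fin A.n ⊕ Fin B.n)).symm x) =
      Quot.mk (fuseRel (crename β A) (crename β B)) ((Equiv.refl (Fin A.n ⊕ Fin B.n)).symm y) := by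
    rintro _ _ ⟨s, h₁, h₂, rfl, rfl⟩
    apply Quot.sound
    refine ⟨β.symm s, Finset.mem_image_of_mem _ h₁, Finset.mem_image_of_mem _ h₂, ?_, ?_⟩
    · show Sum.inl (A.src ⟨s, h₁⟩) =
        Sum.inl (A.src ⟨β (β.symm s), mem_of_mem_crename (Finset.mem_image_of_mem _ h₁)⟩)
      exact congrArg _ (congrArg A.src (Subtype.ext (β.apply_symm_apply s).symm))
    · show Sum.inr (B.src ⟨s, h₂⟩) =
        Sum.inr (B.src ⟨β (β.symm s), mem_of_mem_crename (Finset.mem_image_of_mem _ h₂)⟩)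
      exact congrArg _ (congrArg B.src (Subtype.ext (β.apply_symm_apply s).symm))
  refine giso'_from_ccomp
    (⇑((quotCongr (Equiv.refl (Fin A.n ⊕ Fin B.n)) hq1 hq2).trans (cE A B)))
    (((quotCongr (Equiv.refl (Fin A.n ⊕ Fin B.n)) hq1 hq2).trans (cE A B)).bijective)
    (⇑(finSumFinEquiv (m := A.m) (n := B.m)))
    ((finSumFinEquiv (m := A.m) (n := B.m)).bijective)
    ?_ (fun u => ?_) (fun s h₁ h₂ => ?_)
  · show Finset.image (⇑β.symm) A.srt ∪ Finset.image (⇑β.symm) B.srt =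
      Finset.image (⇑β.symm) (A.srt ∪ B.srt)
    exact (Finset.image_union _ _).symm
  · show (ccomp A B).edg (finSumFinEquiv u) = _
    rw [ccomp_edg_eq A B _]
    erw [Equiv.symm_apply_apply]
    cases u with
    | inl e₁ =>
      simp only [edgSum, crename_edg, Equiv.trans_apply, quotCongr_mk, Equiv.refl_apply]
      rfl
    | inr e₂ =>
      simp only [edgSum, crename_edg, Equiv.trans_apply, quotCongr_mk, Equiv.refl_apply]
      rfl
  · have hβs : β s ∈ A.srt ∪ B.srt := by
      have := mem_of_mem_crename (X := ccomp A B) (β := β) h₂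
      rwa [ccomp_srt] at this
    rw [crename_src_def β (ccomp A B) s h₂ hβs, ccomp_src_eq A B (β s) hβs]
    by_cases hs : s ∈ (crename β A).srt
    · have hsA : β s ∈ A.srt := mem_of_mem_crename hs
      rw [srcSum_pos (crename β A) (crename β B) h₁ hs, srcSum_pos A B hβs hsA]
      rfl
    · have hsA : β s ∉ A.srt := fun hmem => hs (mem_crename_of_mem hmem)
      have hsB : s ∈ (crename β B).srt := (Finset.mem_union.mp h₁).resolve_left hs
      rw [srcSum_neg (crename β A) (crename β B) h₁ hs hsB,
        srcSum_neg A B hβs hsA (mem_of_mem_crename hsB)]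
      rfl

private lemma ccomp_comm_giso (A B : CG Lab ar) : GIso' (ccomp A B) (ccomp B A) := by
  have hq1 : ∀ x y, fuseRel A B x y →
      Quot.mk (fuseRel B A) ((Equiv.sumComm (Fin A.n) (Fin B.n)) x) =
      Quot.mk (fuseRel B A) ((Equiv.sumComm (Fin A.n) (Fin B.n)) y) := by
    rintro _ _ ⟨s, h₁, h₂, rfl, rfl⟩
    exact (Quot.sound ⟨s, h₂, h₁, rfl, rfl⟩).symm
  have hq2 : ∀ x y, fuseRel B A x y →
      Quot.mk (fuseRel A B) ((Equiv.sumComm (Fin A.n) (Fin B.n)).symm x) =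
      Quot.mk (fuseRel A B) ((Equiv.sumComm (Fin A.n) (Fin B.n)).symm y) := by
    rintro _ _ ⟨s, h₁, h₂, rfl, rfl⟩
    exact (Quot.sound ⟨s, h₂, h₁, rfl, rfl⟩).symm
  refine giso'_from_ccomp
    (⇑((quotCongr (Equiv.sumComm (Fin A.n) (Fin B.n)) hq1 hq2).trans (cE B A)))
    (((quotCongr (Equiv.sumComm (Fin A.n) (Fin B.n)) hq1 hq2).trans (cE B A)).bijective)
    (⇑((Equiv.sumComm (Fin A.m) (Fin B.m)).trans (finSumFinEquiv (m := B.m) (n := A.m))))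
    (((Equiv.sumComm (Fin A.m) (Fin B.m)).trans
      (finSumFinEquiv (m := B.m) (n := A.m))).bijective)
    (by rw [ccomp_srt, Finset.union_comm]) (fun u => ?_) (fun s h₁ h₂ => ?_)
  · cases u with
    | inl e₁ =>
      simp only [Equiv.trans_apply, Equiv.sumComm_apply, Sum.swap_inl]
      rw [ccomp_edg_eq B A _, Equiv.symm_apply_apply]
      simp only [edgSum, quotCongr_mk, Equiv.sumComm_apply, Sum.swap_inl]
    | inr e₂ =>
      simp only [Equiv.trans_apply, Equiv.sumComm_apply, Sum.swap_inr]
      rw [ccomp_edg_eq B A _, Equiv.symm_apply_apply]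
      simp only [edgSum, quotCongr_mk, Equiv.sumComm_apply, Sum.swap_inr]
  · rw [ccomp_src_eq B A s h₂]
    by_cases hsA : s ∈ A.srt <;> by_cases hsB : s ∈ B.srt
    · rw [srcSum_pos A B h₁ hsA, srcSum_pos B A h₂ hsB]
      simp only [Equiv.trans_apply, quotCongr_mk, Equiv.sumComm_apply, Sum.swap_inl]
      exact congrArg (cE B A) (Quot.sound ⟨s, hsB, hsA, rfl, rfl⟩).symm
    · rw [srcSum_pos A B h₁ hsA, srcSum_neg B A h₂ hsB hsA]
      simp only [Equiv.trans_apply, quotCongr_mk, Equiv.sumComm_apply, Sum.swap_inl]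
    · rw [srcSum_neg A B h₁ hsA hsB, srcSum_pos B A h₂ hsB]
      simp only [Equiv.trans_apply, quotCongr_mk, Equiv.sumComm_apply, Sum.swap_inr]
    · exact absurd h₁ (by simp [hsA, hsB])

private lemma quotTriv_mk {α : Type} (r : α → α → Prop) (h : ∀ x y, r x y → False) (x : α) :
    quotTriv r h (Quot.mk r x) = x := rfl

private lemma ccomp_zero_giso (H : CG Lab ar) : GIso' (ccomp H (czero ∅)) H := by
  have hrel : ∀ x y, fuseRel H (czero (∅ : Finset ℕ) : CG Lab ar) x y → False := by
    rintro x y ⟨s, _, h₂, _, _⟩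
    exact absurd h₂ (Finset.notMem_empty s)
  have hn0 : (czero (∅ : Finset ℕ) : CG Lab ar).n = 0 := Finset.card_empty (α := ℕ)
  haveI : IsEmpty (Fin (czero (∅ : Finset ℕ) : CG Lab ar).n) := by
    rw [hn0]; infer_instance
  haveI : IsEmpty (Fin (czero (∅ : Finset ℕ) : CG Lab ar).m) := by
    show IsEmpty (Fin 0); infer_instance
  refine giso'_from_ccomp
    (⇑((quotTriv _ hrel).trans
      (Equiv.sumEmpty (Fin H.n) (Fin (czero (∅ : Finset ℕ) : CG Lab ar).n))))
    (((quotTriv _ hrel).trans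
      (Equiv.sumEmpty (Fin H.n) (Fin (czero (∅ : Finset ℕ) : CG Lab ar).n))).bijective)
    (⇑(Equiv.sumEmpty (Fin H.m) (Fin (czero (∅ : Finset ℕ) : CG Lab ar).m)))
    ((Equiv.sumEmpty (Fin H.m) (Fin (czero (∅ : Finset ℕ) : CG Lab ar).m)).bijective)
    (by show H.srt ∪ (∅ : Finset ℕ) = H.srt; simp) (fun u => ?_) (fun s h₁ h₂ => ?_)
  · cases u with
    | inl e₁ =>
      simp only [edgSum, Equiv.trans_apply, quotTriv_mk, Equiv.sumEmpty_apply_inl]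
    | inr e₂ => exact e₂.elim0
  · have hsH : s ∈ H.srt := h₂
    rw [srcSum_pos H (czero ∅) h₁ hsH]
    simp only [Equiv.trans_apply, quotTriv_mk, Equiv.sumEmpty_apply_inl]

/-! #### Associativity of `ccomp` up to isomorphism -/

private def assocFwdAux (A B C : CG Lab ar) : (Fin A.n ⊕ Fin B.n) → Quot (fuseRel A (ccomp B C))
  | .inl a => Quot.mk _ (Sum.inl a)
  | .inr b => Quot.mk _ (Sum.inr (cE B C (Quot.mk _ (Sum.inl b))))

private lemma assocFwdAux_resp (A B C : CG Lab ar) :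
    ∀ x y, fuseRel A B x y → assocFwdAux A B C x = assocFwdAux A B C y := by
  rintro _ _ ⟨s, hA, hB, rfl, rfl⟩
  show Quot.mk _ (Sum.inl (A.src ⟨s, hA⟩)) =
    Quot.mk _ (Sum.inr (cE B C (Quot.mk _ (Sum.inl (B.src ⟨s, hB⟩)))))
  have hBC : s ∈ (ccomp B C).srt := by rw [ccomp_srt]; exact Finset.mem_union_left _ hB
  have key : (ccomp B C).src ⟨s, hBC⟩ = cE B C (Quot.mk _ (Sum.inl (B.src ⟨s, hB⟩))) := by
    rw [ccomp_src_eq B C s hBC, srcSum_pos B C hBC hB]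
  rw [← key]
  exact Quot.sound ⟨s, hA, hBC, rfl, rfl⟩

private def assocFwd (A B C : CG Lab ar) :
    (Fin (ccomp A B).n ⊕ Fin C.n) → Quot (fuseRel A (ccomp B C))
  | .inl v => Quot.lift (assocFwdAux A B C) (assocFwdAux_resp A B C) ((cE A B).symm v)
  | .inr c => Quot.mk _ (Sum.inr (cE B C (Quot.mk _ (Sum.inr c))))

private lemma assocFwd_resp (A B C : CG Lab ar) :
    ∀ x y, fuseRel (ccomp A B) C x y → assocFwd A B C x = assocFwd A B C y := by
  rintro _ _ ⟨s, hAB, hC, rfl, rfl⟩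
  have hBC : s ∈ (ccomp B C).srt := by rw [ccomp_srt]; exact Finset.mem_union_right _ hC
  show Quot.lift (assocFwdAux A B C) (assocFwdAux_resp A B C)
      ((cE A B).symm ((ccomp A B).src ⟨s, hAB⟩)) = _
  rw [ccomp_src_eq A B s hAB, Equiv.symm_apply_apply]
  by_cases hA : s ∈ A.srt
  · rw [srcSum_pos A B hAB hA]
    show Quot.mk _ (Sum.inl (A.src ⟨s, hA⟩)) =
      Quot.mk _ (Sum.inr (cE B C (Quot.mk _ (Sum.inr (C.src ⟨s, hC⟩)))))
    have h1 : Quot.mk (fuseRel A (ccomp B C)) (Sum.inl (A.src ⟨s, hA⟩)) =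
        Quot.mk _ (Sum.inr ((ccomp B C).src ⟨s, hBC⟩)) := Quot.sound ⟨s, hA, hBC, rfl, rfl⟩
    rw [h1, ccomp_src_eq B C s hBC]
    by_cases hB : s ∈ B.srt
    · rw [srcSum_pos B C hBC hB]
      exact congrArg (fun z => Quot.mk (fuseRel A (ccomp B C)) (Sum.inr (cE B C z)))
        (Quot.sound ⟨s, hB, hC, rfl, rfl⟩)
    · rw [srcSum_neg B C hBC hB hC]
  · have hB : s ∈ B.srt := by
      have := Finset.mem_union.mp (by rw [ccomp_srt] at hAB; exact hAB)
      exact this.resolve_left hA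
    rw [srcSum_neg A B hAB hA hB]
    show Quot.mk _ (Sum.inr (cE B C (Quot.mk _ (Sum.inl (B.src ⟨s, hB⟩))))) =
      Quot.mk _ (Sum.inr (cE B C (Quot.mk _ (Sum.inr (C.src ⟨s, hC⟩)))))
    exact congrArg (fun z => Quot.mk (fuseRel A (ccomp B C)) (Sum.inr (cE B C z)))
      (Quot.sound ⟨s, hB, hC, rfl, rfl⟩)

private def assocBwdAux (A B C : CG Lab ar) :
    (Fin B.n ⊕ Fin C.n) → Quot (fuseRel (ccomp A B) C)
  | .inl b => Quot.mk _ (Sum.inl (cE A B (Quot.mk _ (Sum.inr b))))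
  | .inr c => Quot.mk _ (Sum.inr c)

private lemma assocBwdAux_resp (A B C : CG Lab ar) :
    ∀ x y, fuseRel B C x y → assocBwdAux A B C x = assocBwdAux A B C y := by
  rintro _ _ ⟨s, hB, hC, rfl, rfl⟩
  show Quot.mk _ (Sum.inl (cE A B (Quot.mk _ (Sum.inr (B.src ⟨s, hB⟩))))) =
    Quot.mk _ (Sum.inr (C.src ⟨s, hC⟩))
  have hAB : s ∈ (ccomp A B).srt := by rw [ccomp_srt]; exact Finset.mem_union_right _ hB
  have key : cE A B (Quot.mk _ (Sum.inr (B.src ⟨s, hB⟩))) = (ccomp A B).src ⟨s, hAB⟩ := by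
    rw [ccomp_src_eq A B s hAB]
    by_cases hA : s ∈ A.srt
    · rw [srcSum_pos A B hAB hA]
      exact congrArg (cE A B) (Quot.sound ⟨s, hA, hB, rfl, rfl⟩).symm
    · rw [srcSum_neg A B hAB hA hB]
  rw [key]
  exact Quot.sound ⟨s, hAB, hC, rfl, rfl⟩

private def assocBwd (A B C : CG Lab ar) :
    (Fin A.n ⊕ Fin (ccomp B C).n) → Quot (fuseRel (ccomp A B) C)
  | .inl a => Quot.mk _ (Sum.inl (cE A B (Quot.mk _ (Sum.inl a))))
  | .inr v => Quot.lift (assocBwdAux A B C) (assocBwdAux_resp A B C) ((cE B C).symm v)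

private lemma assocBwd_resp (A B C : CG Lab ar) :
    ∀ x y, fuseRel A (ccomp B C) x y → assocBwd A B C x = assocBwd A B C y := by
  rintro _ _ ⟨s, hA, hBC, rfl, rfl⟩
  have hAB : s ∈ (ccomp A B).srt := by rw [ccomp_srt]; exact Finset.mem_union_left _ hA
  show Quot.mk _ (Sum.inl (cE A B (Quot.mk _ (Sum.inl (A.src ⟨s, hA⟩))))) =
    Quot.lift (assocBwdAux A B C) (assocBwdAux_resp A B C)
      ((cE B C).symm ((ccomp B C).src ⟨s, hBC⟩))
  rw [ccomp_src_eq B C s hBC, Equiv.symm_apply_apply]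
  have key : cE A B (Quot.mk _ (Sum.inl (A.src ⟨s, hA⟩))) = (ccomp A B).src ⟨s, hAB⟩ := by
    rw [ccomp_src_eq A B s hAB, srcSum_pos A B hAB hA]
  by_cases hB : s ∈ B.srt
  · rw [srcSum_pos B C hBC hB]
    show _ = Quot.mk _ (Sum.inl (cE A B (Quot.mk _ (Sum.inr (B.src ⟨s, hB⟩)))))
    exact congrArg (fun z => Quot.mk (fuseRel (ccomp A B) C) (Sum.inl (cE A B z)))
      (Quot.sound ⟨s, hA, hB, rfl, rfl⟩)
  · have hC : s ∈ C.srt := by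
      have := Finset.mem_union.mp (by rw [ccomp_srt] at hBC; exact hBC)
      exact this.resolve_left hB
    rw [srcSum_neg B C hBC hB hC]
    show _ = Quot.mk _ (Sum.inr (C.src ⟨s, hC⟩))
    rw [key]
    exact Quot.sound ⟨s, hAB, hC, rfl, rfl⟩

private def assocEquiv (A B C : CG Lab ar) :
    Quot (fuseRel (ccomp A B) C) ≃ Quot (fuseRel A (ccomp B C)) where
  toFun := Quot.lift (assocFwd A B C) (assocFwd_resp A B C)
  invFun := Quot.lift (assocBwd A B C) (assocBwd_resp A B C)
  left_inv := by
    intro q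
    induction q using Quot.ind with | _ x =>
    cases x with
    | inl v =>
      obtain ⟨w, hw⟩ := (cE A B).surjective v
      subst hw
      show Quot.lift (assocBwd A B C) (assocBwd_resp A B C)
        (Quot.lift (assocFwdAux A B C) (assocFwdAux_resp A B C)
          ((cE A B).symm (cE A B w))) = _
      rw [Equiv.symm_apply_apply]
      induction w using Quot.ind with | _ x =>
      cases x with
      | inl a => rfl
      | inr b =>
        show Quot.lift (assocBwdAux A B C) (assocBwdAux_resp A B C)
          ((cE B C).symm (cE B C (Quot.mk _ (Sum.inl b)))) = _
        rw [Equiv.symm_apply_apply]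
        rfl
    | inr c =>
      show Quot.lift (assocBwdAux A B C) (assocBwdAux_resp A B C)
        ((cE B C).symm (cE B C (Quot.mk _ (Sum.inr c)))) = _
      rw [Equiv.symm_apply_apply]
      rfl
  right_inv := by
    intro q
    induction q using Quot.ind with | _ x =>
    cases x with
    | inl a =>
      show Quot.lift (assocFwdAux A B C) (assocFwdAux_resp A B C)
        ((cE A B).symm (cE A B (Quot.mk _ (Sum.inl a)))) = _
      rw [Equiv.symm_apply_apply]
      rfl
    | inr v =>
      obtain ⟨w, hw⟩ := (cE B C).surjective v
      subst hw
      show Quot.lift (assocFwd A B C) (assocFwd_resp A B C)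
        (Quot.lift (assocBwdAux A B C) (assocBwdAux_resp A B C)
          ((cE B C).symm (cE B C w))) = _
      rw [Equiv.symm_apply_apply]
      induction w using Quot.ind with | _ x =>
      cases x with
      | inl b =>
        show Quot.lift (assocFwdAux A B C) (assocFwdAux_resp A B C)
          ((cE A B).symm (cE A B (Quot.mk _ (Sum.inr b)))) = _
        rw [Equiv.symm_apply_apply]
        rfl
      | inr c => rfl

private lemma assocEquiv_mk (A B C : CG Lab ar) (x) :
    assocEquiv A B C (Quot.mk _ x) = assocFwd A B C x := rfl

private lemma assoc_edge_a (A B C : CG Lab ar) (a : Fin A.m) :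
    (ccomp A (ccomp B C)).edg (finSumFinEquiv (Sum.inl a)) =
      ⟨(edgSum (ccomp A B) C (Sum.inl (finSumFinEquiv (Sum.inl a)))).1,
        fun i => cE A (ccomp B C)
          (assocEquiv A B C ((edgSum (ccomp A B) C (Sum.inl (finSumFinEquiv (Sum.inl a)))).2 i))⟩ := by
  rw [ccomp_edg_eq A (ccomp B C) (finSumFinEquiv (Sum.inl a)), Equiv.symm_apply_apply]
  simp only [edgSum]
  rw [ccomp_edg_eq A B (finSumFinEquiv (Sum.inl a)), Equiv.symm_apply_apply]
  simp only [edgSum, assocEquiv_mk, assocFwd, Equiv.symm_apply_apply, Quot.lift_mk,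
    assocFwdAux]

private lemma assoc_edge_b (A B C : CG Lab ar) (b : Fin B.m) :
    (ccomp A (ccomp B C)).edg (finSumFinEquiv (Sum.inr (finSumFinEquiv (Sum.inl b)))) =
      ⟨(edgSum (ccomp A B) C (Sum.inl (finSumFinEquiv (Sum.inr b)))).1,
        fun i => cE A (ccomp B C)
          (assocEquiv A B C ((edgSum (ccomp A B) C (Sum.inl (finSumFinEquiv (Sum.inr b)))).2 i))⟩ := by
  rw [ccomp_edg_eq A (ccomp B C) (finSumFinEquiv (Sum.inr (finSumFinEquiv (Sum.inl b)))),
    Equiv.symm_apply_apply]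
  simp only [edgSum]
  rw [ccomp_edg_eq B C (finSumFinEquiv (Sum.inl b)), Equiv.symm_apply_apply]
  simp only [edgSum]
  rw [ccomp_edg_eq A B (finSumFinEquiv (Sum.inr b)), Equiv.symm_apply_apply]
  simp only [edgSum, assocEquiv_mk, assocFwd, Equiv.symm_apply_apply, Quot.lift_mk,
    assocFwdAux]

private lemma assoc_edge_c (A B C : CG Lab ar) (ec : Fin C.m) :
    (ccomp A (ccomp B C)).edg (finSumFinEquiv (Sum.inr (finSumFinEquiv (Sum.inr ec)))) =
      ⟨(edgSum (ccomp A B) C (Sum.inr ec)).1,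
        fun i => cE A (ccomp B C)
          (assocEquiv A B C ((edgSum (ccomp A B) C (Sum.inr ec)).2 i))⟩ := by
  rw [ccomp_edg_eq A (ccomp B C) (finSumFinEquiv (Sum.inr (finSumFinEquiv (Sum.inr ec)))),
    Equiv.symm_apply_apply]
  simp only [edgSum]
  rw [ccomp_edg_eq B C (finSumFinEquiv (Sum.inr ec)), Equiv.symm_apply_apply]
  simp only [edgSum, assocEquiv_mk, assocFwd, Equiv.symm_apply_apply, Quot.lift_mk,
    assocFwdAux]

private lemma ccomp_assoc_giso (A B C : CG Lab ar) :
    GIso' (ccomp (ccomp A B) C) (ccomp A (ccomp B C)) := by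
  refine giso'_from_ccomp
    (⇑((assocEquiv A B C).trans (cE A (ccomp B C))))
    (((assocEquiv A B C).trans (cE A (ccomp B C))).bijective)
    (⇑((Equiv.sumCongr (finSumFinEquiv (m := A.m) (n := B.m)).symm
        (Equiv.refl (Fin C.m))).trans
      ((Equiv.sumAssoc (Fin A.m) (Fin B.m) (Fin C.m)).trans
        ((Equiv.sumCongr (Equiv.refl (Fin A.m)) (finSumFinEquiv (m := B.m) (n := C.m))).trans
          (finSumFinEquiv (m := A.m) (n := (ccomp B C).m))))))
    (((Equiv.sumCongr (finSumFinEquiv (m := A.m) (n := B.m)).symm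
        (Equiv.refl (Fin C.m))).trans
      ((Equiv.sumAssoc (Fin A.m) (Fin B.m) (Fin C.m)).trans
        ((Equiv.sumCongr (Equiv.refl (Fin A.m)) (finSumFinEquiv (m := B.m) (n := C.m))).trans
          (finSumFinEquiv (m := A.m) (n := (ccomp B C).m))))).bijective)
    (by rw [ccomp_srt, ccomp_srt, ccomp_srt, Finset.union_assoc]) (fun u => ?_)
    (fun s h₁ h₂ => ?_)
  · cases u with
    | inl eab =>
      obtain ⟨w, hw⟩ := (finSumFinEquiv (m := A.m) (n := B.m)).surjective eab
      subst hw
      simp only [Equiv.trans_apply, Equiv.sumCongr_apply, Sum.map_inl,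
        Equiv.symm_apply_apply]
      cases w with
      | inl a =>
        refine Eq.trans (congrArg (ccomp A (ccomp B C)).edg ?_) (assoc_edge_a A B C a)
        exact congrArg (fun x => (finSumFinEquiv (m := A.m) (n := (ccomp B C).m))
          (Sum.map id (finSumFinEquiv (m := B.m) (n := C.m))
            (Equiv.sumAssoc (Fin A.m) (Fin B.m) (Fin C.m) (Sum.inl x))))
          ((finSumFinEquiv (m := A.m) (n := B.m)).symm_apply_apply (Sum.inl a))
      | inr b =>
        refine Eq.trans (congrArg (ccomp A (ccomp B C)).edg ?_) (assoc_edge_b A B C b)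
        exact congrArg (fun x => (finSumFinEquiv (m := A.m) (n := (ccomp B C).m))
          (Sum.map id (finSumFinEquiv (m := B.m) (n := C.m))
            (Equiv.sumAssoc (Fin A.m) (Fin B.m) (Fin C.m) (Sum.inl x))))
          ((finSumFinEquiv (m := A.m) (n := B.m)).symm_apply_apply (Sum.inr b))
    | inr ec =>
      simp only [Equiv.trans_apply, Equiv.sumCongr_apply, Sum.map_inr, Equiv.refl_apply,
        Equiv.sumAssoc_apply_inr]
      exact assoc_edge_c A B C ec
  · rw [ccomp_src_eq A (ccomp B C) s h₂]
    have h₁' : s ∈ (A.srt ∪ B.srt) ∪ C.srt := by rwa [ccomp_srt] at h₁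
    by_cases hA : s ∈ A.srt
    · have hAB : s ∈ (ccomp A B).srt := by
        rw [ccomp_srt]; exact Finset.mem_union_left _ hA
      rw [srcSum_pos (ccomp A B) C h₁ hAB, srcSum_pos A (ccomp B C) h₂ hA,
        ccomp_src_eq A B s hAB, srcSum_pos A B hAB hA]
      simp only [Equiv.trans_apply, assocEquiv_mk, assocFwd, Equiv.symm_apply_apply,
        Quot.lift_mk, assocFwdAux]
    · by_cases hB : s ∈ B.srt
      · have hAB : s ∈ (ccomp A B).srt := by
          rw [ccomp_srt]; exact Finset.mem_union_right _ hB
        have hBC : s ∈ (ccomp B C).srt := by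
          rw [ccomp_srt]; exact Finset.mem_union_left _ hB
        rw [srcSum_pos (ccomp A B) C h₁ hAB, srcSum_neg A (ccomp B C) h₂ hA hBC,
          ccomp_src_eq A B s hAB, srcSum_neg A B hAB hA hB,
          ccomp_src_eq B C s hBC, srcSum_pos B C hBC hB]
        simp only [Equiv.trans_apply, assocEquiv_mk, assocFwd, Equiv.symm_apply_apply,
          Quot.lift_mk, assocFwdAux]
      · have hC : s ∈ C.srt := by
          rcases Finset.mem_union.mp h₁' with h' | h'
          · exact absurd (Finset.mem_union.mp h') (by simp [hA, hB])
          · exact h'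
        have hAB : s ∉ (ccomp A B).srt := by
          rw [ccomp_srt]; simp [hA, hB]
        have hBC : s ∈ (ccomp B C).srt := by
          rw [ccomp_srt]; exact Finset.mem_union_right _ hC
        rw [srcSum_neg (ccomp A B) C h₁ hAB hC, srcSum_neg A (ccomp B C) h₂ hA hBC,
          ccomp_src_eq B C s hBC, srcSum_neg B C hBC hB hC]
        simp only [Equiv.trans_apply, assocEquiv_mk, assocFwd, Equiv.symm_apply_apply,
          Quot.lift_mk, assocFwdAux]

/-! #### The relation given by restricted contexts -/

private def Rrel (L : Set (CG Lab ar)) (X Y : CG Lab ar) : Prop :=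
  X.srt = Y.srt ∧ ∀ (G : CG Lab ar) (α : Equiv.Perm ℕ), IsFinPerm α → ∀ τ : Finset ℕ,
    (crename α (crestrict τ (ccomp X G)) ∈ L ↔ crename α (crestrict τ (ccomp Y G)) ∈ L)

section WithL

variable {L : Set (CG Lab ar)}

private lemma memL (hiso : IsoClosed L) {X Y : CG Lab ar} (h : GIso' X Y) : X ∈ L ↔ Y ∈ L :=
  ⟨fun hx => hiso _ _ (giso_iff.mpr h) hx, fun hy => hiso _ _ (giso_iff.mpr (giso'_symm h)) hy⟩

private lemma chainR (A G : CG Lab ar) (α β : Equiv.Perm ℕ) (τ τ' : Finset ℕ)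
    (hfix : ∀ x ∈ A.srt ∩ τ', β x = x)
    (hfresh : A.srt ∩ (crename β G).srt ⊆ τ') :
    GIso' (crename α (crestrict τ (ccomp (crestrict τ' A) G)))
      (crename (β.symm * α)
        (crestrict (((A.srt ∩ τ') ∪ (crename β G).srt) ∩ τ.image β.symm)
          (ccomp A (crename β G)))) := by
  have hβ : β * (β.symm * α) = α := by
    rw [← mul_assoc]
    have : β * β.symm = 1 := by
      ext x; simp
    rw [this, one_mul]
  have h1 : GIso' (crename α (crestrict τ (ccomp (crestrict τ' A) G)))
      (crename (β.symm * α) (crename β (crestrict τ (ccomp (crestrict τ' A) G)))) := by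
    apply giso'_symm
    have h := rename_rename_giso (β.symm * α) β (crestrict τ (ccomp (crestrict τ' A) G))
    rwa [hβ] at h
  refine giso'_trans h1 (giso'_crename _ ?_)
  refine giso'_trans (rename_restrict_giso β τ _) ?_
  refine giso'_trans (giso'_crestrict _ (rename_ccomp_giso β _ _)) ?_
  refine giso'_trans (giso'_crestrict _
    (giso'_ccomp (rename_fix_giso β (crestrict τ' A) hfix) (giso'_refl _))) ?_
  refine giso'_trans (giso'_crestrict _ (ccomp_restrict_fresh τ' A (crename β G) hfresh)) ?_
  exact restrict_restrict_giso _ _ _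

private lemma chainRen (A G : CG Lab ar) (α β : Equiv.Perm ℕ) (τ : Finset ℕ) :
    GIso' (crename α (crestrict τ (ccomp (crename β A) G)))
      (crename (β * α) (crestrict (τ.image β) (ccomp A (crename β.symm G)))) := by
  have hG : GIso' (ccomp (crename β A) G) (crename β (ccomp A (crename β.symm G))) := by
    apply giso'_symm
    refine giso'_trans (rename_ccomp_giso β A (crename β.symm G)) ?_
    refine giso'_ccomp (giso'_refl _) ?_
    refine giso'_trans (rename_rename_giso β β.symm G) ?_
    have : β.symm * β = 1 := by ext x; simp
    rw [this]
    exact rename_one_giso G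
  refine giso'_trans (giso'_crename α (giso'_crestrict τ hG)) ?_
  refine giso'_trans (giso'_crename α (restrict_rename_giso τ β _)) ?_
  exact rename_rename_giso α β _

private lemma Rrel_extract (hiso : IsoClosed L) {X Y : CG Lab ar} (h : Rrel L X Y) : X ∈ L ↔ Y ∈ L := by
  obtain ⟨hs, hm⟩ := h
  have e := hm (czero ∅) 1 isFinPerm_one X.srt
  have iX : GIso' (crename 1 (crestrict X.srt (ccomp X (czero ∅)))) X := by
    refine giso'_trans (rename_one_giso _) ?_
    refine giso'_trans (restrict_of_subset_giso ?_) (ccomp_zero_giso X)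
    rw [ccomp_srt]
    simp [czero]
  have iY : GIso' (crename 1 (crestrict X.srt (ccomp Y (czero ∅)))) Y := by
    refine giso'_trans (rename_one_giso _) ?_
    refine giso'_trans (restrict_of_subset_giso ?_) (ccomp_zero_giso Y)
    rw [ccomp_srt, hs]
    simp [czero]
  rw [← memL hiso iX, ← memL hiso iY]
  exact e

private lemma Rrel_restrict (hiso : IsoClosed L) (τ' : Finset ℕ) {X Y : CG Lab ar} (h : Rrel L X Y) :
    Rrel L (crestrict τ' X) (crestrict τ' Y) := by
  obtain ⟨hs, hm⟩ := h
  refine ⟨by rw [crestrict_srt, crestrict_srt, hs], fun G α hα τ => ?_⟩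
  obtain ⟨γ, T, hT, hγC, hγfix⟩ :=
    exists_fresh_perm (G.srt ∩ (X.srt \ τ')) (X.srt ∪ G.srt ∪ τ')
  set β := γ.symm with hβdef
  have hγs : ∀ x, γ x = x → β x = x := fun x hx => by
    rw [hβdef]
    conv_lhs => rw [← hx]
    exact γ.symm_apply_apply x
  have hfixX : ∀ x ∈ X.srt ∩ τ', β x = x := by
    intro x hx
    obtain ⟨hx1, hx2⟩ := Finset.mem_inter.mp hx
    refine hγs x (hγfix x ?_ ?_)
    · intro hmem
      exact (Finset.mem_sdiff.mp (Finset.mem_inter.mp hmem).2).2 hx2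
    · exact Finset.mem_union_left _ (Finset.mem_union_left _ hx1)
  have hfreshX : X.srt ∩ (crename β G).srt ⊆ τ' := by
    intro x hx
    obtain ⟨hx1, hx2⟩ := Finset.mem_inter.mp hx
    rw [crename_srt] at hx2
    obtain ⟨y, hy, hyx⟩ := Finset.mem_image.mp hx2
    have hyβ : β.symm = γ := by rw [hβdef]; simp
    rw [hyβ] at hyx
    by_cases hyC : y ∈ G.srt ∩ (X.srt \ τ')
    · exact absurd (Finset.mem_union_left _ (Finset.mem_union_left _ hx1))
        (hyx ▸ hγC y hyC)
    · have : γ y = y := hγfix y hyC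
        (Finset.mem_union_left _ (Finset.mem_union_right _ hy))
      rw [this] at hyx
      subst hyx
      by_contra hxτ
      exact hyC (Finset.mem_inter.mpr ⟨hy, Finset.mem_sdiff.mpr ⟨hx1, hxτ⟩⟩)
  have hfixY : ∀ x ∈ Y.srt ∩ τ', β x = x := by rw [← hs]; exact hfixX
  have hfreshY : Y.srt ∩ (crename β G).srt ⊆ τ' := by rw [← hs]; exact hfreshX
  have c1 := chainR X G α β τ τ' hfixX hfreshX
  have c2 := chainR Y G α β τ τ' hfixY hfreshY
  have hβfin : IsFinPerm β := by
    rw [hβdef]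
    exact isFinPerm_symm ⟨T, hT⟩
  rw [memL hiso c1, memL hiso c2, ← hs]
  exact hm (crename β G) (β.symm * α) (isFinPerm_mul (isFinPerm_symm hβfin) hα) _

private lemma Rrel_rename (hiso : IsoClosed L) (β : Equiv.Perm ℕ) (hβ : IsFinPerm β) {X Y : CG Lab ar} (h : Rrel L X Y) :
    Rrel L (crename β X) (crename β Y) := by
  obtain ⟨hs, hm⟩ := h
  refine ⟨by rw [crename_srt, crename_srt, hs], fun G α hα τ => ?_⟩
  rw [memL hiso (chainRen X G α β τ), memL hiso (chainRen Y G α β τ)]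
  exact hm (crename β.symm G) (β * α) (isFinPerm_mul hβ hα) _

private lemma Rrel_comp (hiso : IsoClosed L) {X Y X' Y' : CG Lab ar} (h1 : Rrel L X Y) (h2 : Rrel L X' Y') :
    Rrel L (ccomp X X') (ccomp Y Y') := by
  obtain ⟨hs1, hm1⟩ := h1
  obtain ⟨hs2, hm2⟩ := h2
  refine ⟨by rw [ccomp_srt, ccomp_srt, hs1, hs2], fun G α hα τ => ?_⟩
  have e1 : GIso' (crename α (crestrict τ (ccomp (ccomp X X') G)))
      (crename α (crestrict τ (ccomp X (ccomp X' G)))) :=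
    giso'_crename _ (giso'_crestrict _ (ccomp_assoc_giso X X' G))
  have e2 : GIso' (crename α (crestrict τ (ccomp Y (ccomp X' G))))
      (crename α (crestrict τ (ccomp X' (ccomp Y G)))) := by
    refine giso'_crename _ (giso'_crestrict _ ?_)
    refine giso'_trans (giso'_symm (ccomp_assoc_giso Y X' G)) ?_
    refine giso'_trans (giso'_ccomp (ccomp_comm_giso Y X') (giso'_refl G)) ?_
    exact ccomp_assoc_giso X' Y G
  have e3 : GIso' (crename α (crestrict τ (ccomp Y' (ccomp Y G))))
      (crename α (crestrict τ (ccomp (ccomp Y Y') G))) := by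
    refine giso'_crename _ (giso'_crestrict _ ?_)
    refine giso'_trans (giso'_symm (ccomp_assoc_giso Y' Y G)) ?_
    refine giso'_trans (giso'_ccomp (ccomp_comm_giso Y' Y) (giso'_refl G)) ?_
    exact giso'_refl _
  rw [memL hiso e1, hm1 (ccomp X' G) α hα τ, memL hiso e2,
    hm2 (ccomp Y G) α hα τ, memL hiso e3]

private lemma Rrel_key (hiso : IsoClosed L) {G₁ G₂ : CG Lab ar} (h : Rrel L G₁ G₂) :
    ∀ c : HRCtx Lab ar, Rrel L (c.apply G₁) (c.apply G₂)
  | .hole => h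
  | .const H => ⟨rfl, fun _ _ _ _ => Iff.rfl⟩
  | .zero τ => ⟨rfl, fun _ _ _ _ => Iff.rfl⟩
  | .edge a s => ⟨rfl, fun _ _ _ _ => Iff.rfl⟩
  | .restrict τ c => Rrel_restrict hiso τ (Rrel_key hiso h c)
  | .rename α hα c => Rrel_rename hiso α hα (Rrel_key hiso h c)
  | .comp c₁ c₂ => Rrel_comp hiso (Rrel_key hiso h c₁) (Rrel_key hiso h c₂)

end WithL

end Aux

/-- For any set `L` of graphs, `G₁` and `G₂` are equivalent under
the syntactic congruence of `L` in the HR graph algebra iff they have the same sort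
and for every graph `G`, every finite permutation `α` of source labels, and every
finite sort `τ`, `rename_α(restrict_τ(G₁ ∥ G)) ∈ L ⟺ rename_α(restrict_τ(G₂ ∥ G)) ∈ L`. -/
theorem syntactic_congruence_characterization {Lab : Type} {ar : Lab → ℕ}
    (L : Set (CG Lab ar)) (hiso : IsoClosed L) (G₁ G₂ : CG Lab ar) :
    SynCongHR L G₁ G₂ ↔
      (G₁.srt = G₂.srt ∧ ∀ (G : CG Lab ar) (α : Equiv.Perm ℕ), IsFinPerm α →
        ∀ τ : Finset ℕ,
        (crename α (crestrict τ (ccomp G₁ G)) ∈ L ↔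
         crename α (crestrict τ (ccomp G₂ G)) ∈ L)) := by
  constructor
  · rintro ⟨hsrt, hctx⟩
    exact ⟨hsrt, fun G α hα τ =>
      hctx (HRCtx.rename α hα (HRCtx.restrict τ (HRCtx.comp HRCtx.hole (HRCtx.const G))))⟩
  · rintro ⟨hsrt, hmem⟩
    exact ⟨hsrt, fun c => Rrel_extract hiso (Rrel_key hiso ⟨hsrt, hmem⟩ c)⟩

end

end GraphCF
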